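/- Let f : 𝕋 → ℝ be continuous on the circle 𝕋 = ℝ/ℤ with 0 ≤ f ≤ 1, and let φ ∈ Φ. For each y ∈ [0,1) let (l_{y,k})_k be the lengths of the component arcs of the superlevel set E_y = {x : f(x) > y}. If ∫_0^1 (Σ_k l_{y,k} φ(l_{y,k})) dy < ∞, then there exists a constant C > 0 such that ω(f,t)_1 ≤ C/φ(t) for all t ∈ (0,1]. -/

import Mathlib

open MeasureTheory Set

/-- The `L^p` modulus of continuity `ω(f,t)_p` on the circle `𝕋 = ℝ/ℤ`. -/
noncomputable def modulus (f : AddCircle (1:ℝ) → ℝ) (p t : ℝ) : ℝ :=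
  ⨆ h : {h : ℝ // |h| ≤ t},
    (∫ x : AddCircle (1:ℝ), |f (x + ((h.1 : ℝ) : AddCircle (1:ℝ))) - f x| ^ p) ^ (1/p)

/-- `τ(h,E)`: the measure of the set where the characteristic function of `E`
translated by `h` differs from itself. -/
noncomputable def tau (h : ℝ) (E : Set (AddCircle (1:ℝ))) : ℝ :=
  (volume {x : AddCircle (1:ℝ) |
    E.indicator (fun _ => (1:ℝ)) (x + ((h : ℝ) : AddCircle (1:ℝ)))
      ≠ E.indicator (fun _ => (1:ℝ)) x}).toReal

/-- The open arc of the circle which is the image of the interval `(a, a+l)`. -/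
noncomputable def arc (a l : ℝ) : Set (AddCircle (1:ℝ)) :=
  (fun r : ℝ => (r : AddCircle (1:ℝ))) '' Set.Ioo a (a + l)

/-- The class `Φ`: `φ` is positive and non-increasing on `(0,1]`, and `t ↦ t·φ(t)` is
non-decreasing, concave and bounded on some interval `(0,1/c)` with `c > 1`. -/
def IsPhiClass (φ : ℝ → ℝ) : Prop :=
  (∀ t ∈ Set.Ioc (0:ℝ) 1, 0 < φ t) ∧
  AntitoneOn φ (Set.Ioc 0 1) ∧
  ∃ c > (1:ℝ), MonotoneOn (fun t => t * φ t) (Set.Ioo 0 (1/c)) ∧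
    ConcaveOn ℝ (Set.Ioo 0 (1/c)) (fun t => t * φ t) ∧
    BddAbove ((fun t => t * φ t) '' Set.Ioo 0 (1/c))

section Aux

open Function
open scoped ENNReal

lemma real_fact_zero_lt_one : Fact ((0:ℝ) < 1) := ⟨one_pos⟩

attribute [local instance] real_fact_zero_lt_one

lemma arc_isOpen (b m : ℝ) : IsOpen (arc b m) :=
  QuotientAddGroup.isOpenMap_coe _ isOpen_Ioo

lemma arc_measurable (b m : ℝ) : MeasurableSet (arc b m) :=
  (arc_isOpen b m).measurableSet

lemma coe_eq_coe_int (r s : ℝ) (h : (r : AddCircle (1:ℝ)) = (s : AddCircle (1:ℝ))) :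
    ∃ n : ℤ, (n : ℝ) = r - s := by
  rw [← sub_eq_zero, ← AddCircle.coe_sub] at h
  obtain ⟨n, hn⟩ := (AddCircle.coe_eq_zero_iff 1).mp h
  exact ⟨n, by simpa using hn⟩

lemma vol_arc (b m : ℝ) (hm : m ≤ 1) : volume (arc b m) ≤ ENNReal.ofReal m := by
  rcases le_or_gt m 0 with h0 | h0
  · have : arc b m = ∅ := by
      simp [arc, Set.Ioo_eq_empty (by linarith : ¬ b < b + m)]
    simp [this]
  · have hmp := (AddCircle.measurePreserving_mk 1 b).measure_preimage
      (arc_measurable b m).nullMeasurableSet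
    have hpre : MeasurableSet (((↑) : ℝ → AddCircle (1:ℝ)) ⁻¹' arc b m) :=
      AddCircle.measurable_mk' (arc_measurable b m)
    rw [← hmp, Measure.restrict_apply hpre]
    have hsub : ((↑) : ℝ → AddCircle (1:ℝ)) ⁻¹' arc b m ∩ Ioc b (b + 1) ⊆ Ioo b (b + m) := by
      rintro r ⟨hr1, hr2⟩
      obtain ⟨s, hs, hsr⟩ := hr1
      obtain ⟨n, hn⟩ := coe_eq_coe_int s r hsr
      have hn0 : n = 0 := by
        have h1 : (n : ℝ) < 1 := by
          have := hr2.1; have := hs.2; rw [hn]; linarith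
        have h2 : (-1 : ℝ) < (n : ℝ) := by
          have := hr2.2; have := hs.1; rw [hn]; linarith
        exact_mod_cast (by omega : ∀ k : ℤ, (k < 1) → (-1 < k) → k = 0) n
          (by exact_mod_cast h1) (by exact_mod_cast h2)
      have : s = r := by rw [hn0] at hn; push_cast at hn; linarith
      rw [← this]; exact hs
    calc volume (((↑) : ℝ → AddCircle (1:ℝ)) ⁻¹' arc b m ∩ Ioc b (b + 1))
        ≤ volume (Ioo b (b + m)) := measure_mono hsub
      _ = ENNReal.ofReal m := by rw [Real.volume_Ioo]; ring_nf

lemma vol_singleton (x : AddCircle (1:ℝ)) : volume {x} = 0 := by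
  obtain ⟨r, rfl⟩ := QuotientAddGroup.mk_surjective x
  have hmp := (AddCircle.measurePreserving_mk 1 r).measure_preimage
    (measurableSet_singleton ((r : AddCircle (1:ℝ)))).nullMeasurableSet
  have hpre : MeasurableSet (((↑) : ℝ → AddCircle (1:ℝ)) ⁻¹' {((r : ℝ) : AddCircle (1:ℝ))}) :=
    AddCircle.measurable_mk' (measurableSet_singleton _)
  rw [← hmp, Measure.restrict_apply hpre]
  have hsub : QuotientAddGroup.mk ⁻¹' {((r : ℝ) : AddCircle (1:ℝ))} ∩ Ioc r (r + 1)
      ⊆ Set.range (fun n : ℤ => r + n) := by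
    rintro s ⟨hs1, _⟩
    obtain ⟨n, hn⟩ := coe_eq_coe_int s r hs1
    exact ⟨n, by simp [hn]⟩
  exact measure_mono_null hsub ((Set.countable_range _).measure_zero _)

lemma vol_mk_Icc (p q : ℝ) (h1 : q - p ≤ 1) :
    volume ((fun r : ℝ => (r : AddCircle (1:ℝ))) '' Icc p q) ≤ ENNReal.ofReal (q - p) := by
  rcases lt_or_ge q p with h | h
  · simp [Set.Icc_eq_empty (not_le.mpr h)]
  · have hsub : Icc p q ⊆ Ioo p q ∪ ({p} ∪ {q}) := by
      intro r hr
      rcases eq_or_lt_of_le hr.1 with h1' | h1'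
      · exact Or.inr (Or.inl (by simp [h1'.symm]))
      rcases eq_or_lt_of_le hr.2 with h2' | h2'
      · exact Or.inr (Or.inr (by simp [h2']))
      · exact Or.inl ⟨h1', h2'⟩
    calc volume ((fun r : ℝ => (r : AddCircle (1:ℝ))) '' Icc p q)
        ≤ volume ((fun r : ℝ => (r : AddCircle (1:ℝ))) '' (Ioo p q ∪ ({p} ∪ {q}))) :=
          measure_mono (Set.image_mono hsub)
      _ ≤ volume ((fun r : ℝ => (r : AddCircle (1:ℝ))) '' Ioo p q)
            + (volume {((p:ℝ) : AddCircle (1:ℝ))} + volume {((q:ℝ) : AddCircle (1:ℝ))}) := by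
          rw [Set.image_union, Set.image_union]
          refine le_trans (measure_union_le _ _) ?_
          gcongr
          refine le_trans (measure_union_le _ _) ?_
          simp
      _ ≤ ENNReal.ofReal (q - p) := by
          rw [vol_singleton, vol_singleton]
          have : (fun r : ℝ => (r : AddCircle (1:ℝ))) '' Ioo p q = arc p (q - p) := by
            simp [arc]
          rw [this]
          simpa using vol_arc p (q - p) h1

lemma preimage_add_arc (h b m : ℝ) :
    (fun x : AddCircle (1:ℝ) => x + ((h : ℝ) : AddCircle (1:ℝ))) ⁻¹' arc b m
      = arc (b - h) m := by
  ext x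
  simp only [arc, Set.mem_preimage, Set.mem_image, Set.mem_Ioo]
  constructor
  · rintro ⟨r, hr, hrx⟩
    refine ⟨r - h, ⟨by linarith [hr.1], by linarith [hr.2]⟩, ?_⟩
    rw [AddCircle.coe_sub, hrx]; abel
  · rintro ⟨r, hr, rfl⟩
    exact ⟨r + h, ⟨by linarith [hr.1], by linarith [hr.2]⟩, by rw [AddCircle.coe_add]⟩

lemma arc_diff (u v m : ℝ) (hm1 : m ≤ 1) (huv : |u - v| ≤ 1) :
    volume (arc u m \ arc v m) ≤ ENNReal.ofReal (min |u - v| m) := by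
  rcases le_total m |u - v| with hc | hc
  · rw [min_eq_right hc]
    exact le_trans (measure_mono Set.diff_subset) (vol_arc u m hm1)
  · rw [min_eq_left hc]
    have hkey : ∀ r, r ∈ Ioo u (u + m) → (r : AddCircle (1:ℝ)) ∉ arc v m →
        r ∉ Ioo v (v + m) := by
      intro r _ hr2 hmem
      exact hr2 ⟨r, by simpa using hmem, rfl⟩
    rcases le_total u v with huv' | huv'
    · have habs : |u - v| = v - u := by rw [abs_sub_comm, abs_of_nonneg (by linarith)]
      have hsub : arc u m \ arc v m ⊆ (fun r : ℝ => (r : AddCircle (1:ℝ))) '' Icc u v := by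
        rintro x ⟨⟨r, hr, rfl⟩, hx⟩
        have hno := hkey r (by simpa using hr) hx
        simp only [Set.mem_Ioo, not_and_or, not_lt] at hno
        have hr' : r ∈ Set.Ioo u (u + m) := by simpa using hr
        have : r ≤ v := by
          rcases hno with h' | h'
          · exact h'
          · exfalso; have := hr'.2; have : v - u ≤ m := by rw [← habs]; exact hc
            linarith [hr'.2]
        exact ⟨r, ⟨hr'.1.le, this⟩, rfl⟩
      refine le_trans (measure_mono hsub) ?_
      refine le_trans (vol_mk_Icc u v (by linarith [habs ▸ huv])) ?_
      rw [habs]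
    · have habs : |u - v| = u - v := abs_of_nonneg (by linarith)
      have hsub : arc u m \ arc v m ⊆
          (fun r : ℝ => (r : AddCircle (1:ℝ))) '' Icc (v + m) (u + m) := by
        rintro x ⟨⟨r, hr, rfl⟩, hx⟩
        have hno := hkey r (by simpa using hr) hx
        simp only [Set.mem_Ioo, not_and_or, not_lt] at hno
        have hr' : r ∈ Set.Ioo u (u + m) := by simpa using hr
        have : v + m ≤ r := by
          rcases hno with h' | h'
          · exfalso; linarith [hr'.1]
          · exact h'
        exact ⟨r, ⟨this, hr'.2.le⟩, rfl⟩
      refine le_trans (measure_mono hsub) ?_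
      have h2 : (u + m) - (v + m) = u - v := by ring
      refine le_trans (vol_mk_Icc (v + m) (u + m) (by rw [h2]; linarith [habs ▸ huv])) ?_
      rw [h2, ← habs, abs_abs]

lemma phi_key (φ : ℝ → ℝ) (hφ : IsPhiClass φ) :
    ∃ A ≥ (1:ℝ), ∀ t ∈ Set.Ioc (0:ℝ) 1, ∀ h : ℝ, |h| ≤ t →
      ∀ m ∈ Set.Ioc (0:ℝ) 1, min |h| m * φ t ≤ A * (m * φ m) := by
  obtain ⟨hpos, hanti, c, hc, hmono, -, hbdd⟩ := hφ
  have hc0 : (0:ℝ) < 1/c := by positivity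
  have hc1 : (1:ℝ)/c < 1 := by
    rw [div_lt_one (by linarith)]; linarith
  have hφ1 : 0 < φ 1 := hpos 1 ⟨one_pos, le_refl 1⟩
  have hφc : 0 < φ (1/c) := hpos _ ⟨hc0, hc1.le⟩
  obtain ⟨B, hB⟩ := hbdd
  set B' := max B (φ (1/c)) with hB'
  have hBound : ∀ s ∈ Set.Ioc (0:ℝ) 1, s * φ s ≤ B' := by
    intro s hs
    rcases lt_or_ge s (1/c) with h | h
    · exact le_trans (hB ⟨s, ⟨hs.1, h⟩, rfl⟩) (le_max_left _ _)
    · calc s * φ s ≤ 1 * φ (1/c) :=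
            mul_le_mul hs.2 (hanti ⟨hc0, hc1.le⟩ hs h) (hpos s hs).le zero_le_one
        _ = φ (1/c) := one_mul _
        _ ≤ B' := le_max_right _ _
  have hB'0 : 0 < B' := lt_of_lt_of_le hφc (le_max_right _ _)
  set A := max 1 (B' * c / φ 1) with hA
  have hA1 : (1:ℝ) ≤ A := le_max_left _ _
  have hmain : ∀ s u : ℝ, 0 < s → s ≤ u → u ≤ 1 → s * φ s ≤ A * (u * φ u) := by
    intro s u hs hsu hu1
    have hu0 : 0 < u := lt_of_lt_of_le hs hsu
    have hφu : 0 < φ u := hpos u ⟨hu0, hu1⟩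
    rcases lt_or_ge u (1/c) with h | h
    · have h1 := hmono ⟨hs, lt_of_le_of_lt hsu h⟩ ⟨hu0, h⟩ hsu
      simp only at h1
      nlinarith [mul_pos hu0 hφu]
    · have h1 : s * φ s ≤ B' := hBound s ⟨hs, le_trans hsu hu1⟩
      have h2 : φ 1 ≤ φ u := hanti ⟨hu0, hu1⟩ ⟨one_pos, le_refl 1⟩ hu1
      have hcu : 1 ≤ u * c := (div_le_iff₀ (by linarith)).mp h
      have h3 : B' ≤ (B' * c / φ 1) * (u * φ u) := by
        rw [div_mul_eq_mul_div, le_div_iff₀ hφ1]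
        have hA2 : φ u ≤ c * u * φ u := by nlinarith
        nlinarith [mul_le_mul_of_nonneg_left (le_trans h2 hA2) hB'0.le]
      calc s * φ s ≤ B' := h1
        _ ≤ (B' * c / φ 1) * (u * φ u) := h3
        _ ≤ A * (u * φ u) :=
            mul_le_mul_of_nonneg_right (le_max_right _ _)
              (mul_nonneg hu0.le hφu.le)
  refine ⟨A, hA1, ?_⟩
  intro t ht h hh m hm
  have hφt : 0 < φ t := hpos t ht
  have hφm : 0 < φ m := hpos m hm
  rcases le_or_gt m |h| with hle | hlt
  · have hfm : φ t ≤ φ m := hanti hm ht (le_trans hle hh)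
    calc min |h| m * φ t = m * φ t := by rw [min_eq_right hle]
      _ ≤ m * φ m := mul_le_mul_of_nonneg_left hfm hm.1.le
      _ ≤ A * (m * φ m) := le_mul_of_one_le_left (mul_nonneg hm.1.le hφm.le) hA1
  · rcases eq_or_lt_of_le (abs_nonneg h) with h0 | h0
    · rw [min_eq_left hlt.le, ← h0]
      nlinarith [mul_pos hm.1 hφm]
    · calc min |h| m * φ t = |h| * φ t := by rw [min_eq_left hlt.le]
        _ ≤ |h| * φ |h| :=
            mul_le_mul_of_nonneg_left (hanti ⟨h0, le_trans hh ht.2⟩ ht hh) (abs_nonneg h)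
        _ ≤ A * (m * φ m) := hmain |h| m h0 hlt.le hm.2

end Aux

open Function
open scoped ENNReal

/-- If `f` is continuous on the circle with `0 ≤ f ≤ 1`, `φ ∈ Φ`, and the
superlevel sets `E_y = {x : f x > y}` decompose into disjoint arcs of lengths `l_{y,k}` with
`∫₀¹ ∑_k l_{y,k} φ(l_{y,k}) dy < ∞`, then `ω(f,t)_1 ≤ C/φ(t)` on `(0,1]` for some `C > 0`. -/
theorem stmt_0 (f : AddCircle (1:ℝ) → ℝ) (hf : Continuous f)
    (hf0 : ∀ x, 0 ≤ f x) (hf1 : ∀ x, f x ≤ 1)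
    (φ : ℝ → ℝ) (hφ : IsPhiClass φ)
    (a l : ℝ → ℕ → ℝ) (K : ℝ → Set ℕ)
    (hdecomp : ∀ y ∈ Set.Ico (0:ℝ) 1,
      {x : AddCircle (1:ℝ) | f x > y} = ⋃ k ∈ K y, arc (a y k) (l y k))
    (hdisj : ∀ y ∈ Set.Ico (0:ℝ) 1,
      (K y).PairwiseDisjoint (fun k => arc (a y k) (l y k)))
    (hlen : ∀ y ∈ Set.Ico (0:ℝ) 1, ∀ k ∈ K y, l y k ∈ Set.Ioc (0:ℝ) 1)
    (hint : ∫⁻ y in Set.Ioo (0:ℝ) 1,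
      ∑' k : K y, ENNReal.ofReal (l y k * φ (l y k)) < ⊤) :
    ∃ C > 0, ∀ t ∈ Set.Ioc (0:ℝ) 1, modulus f 1 t ≤ C / φ t := by
  classical
  obtain ⟨A, hA1, hkey⟩ := phi_key φ hφ
  have hpos := hφ.1
  set lint := ∫⁻ y in Set.Ioo (0:ℝ) 1,
    ∑' k : K y, ENNReal.ofReal (l y k * φ (l y k)) with hlint
  set M := lint.toReal with hMdef
  have hM0 : 0 ≤ M := ENNReal.toReal_nonneg
  have hA0 : (0:ℝ) < A := lt_of_lt_of_le one_pos hA1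
  refine ⟨2*A*M + 1, by nlinarith, ?_⟩
  intro t ht
  have hφt : 0 < φ t := hpos t ht
  have hrw : modulus f 1 t = ⨆ h : {h : ℝ // |h| ≤ t},
      ∫ x : AddCircle (1:ℝ), |f (x + ((h.1 : ℝ) : AddCircle (1:ℝ))) - f x| := by
    unfold modulus
    norm_num
  rw [hrw]
  haveI hne : Nonempty {h : ℝ // |h| ≤ t} := ⟨⟨0, by simpa using ht.1.le⟩⟩
  refine ciSup_le ?_
  rintro ⟨h, hh⟩
  set hbar : AddCircle (1:ℝ) := ((h : ℝ) : AddCircle (1:ℝ)) with hhb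
  have hg : Continuous fun x : AddCircle (1:ℝ) => |f (x + hbar) - f x| :=
    ((hf.comp (continuous_add_right hbar)).sub hf).abs
  set c₀ := 2 * A / φ t with hc₀
  have hc₀0 : 0 ≤ c₀ := by positivity
  set P : Set (AddCircle (1:ℝ) × ℝ) :=
    {p | (p.2 < f (p.1 + hbar) ∧ ¬ p.2 < f p.1) ∨ (p.2 < f p.1 ∧ ¬ p.2 < f (p.1 + hbar))} with hP
  have hO1 : IsOpen {p : AddCircle (1:ℝ) × ℝ | p.2 < f (p.1 + hbar)} :=
    isOpen_lt continuous_snd (hf.comp (continuous_fst.add continuous_const))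
  have hO2 : IsOpen {p : AddCircle (1:ℝ) × ℝ | p.2 < f p.1} :=
    isOpen_lt continuous_snd (hf.comp continuous_fst)
  have hPm : MeasurableSet P := by
    have hPeq : P = ({p : AddCircle (1:ℝ) × ℝ | p.2 < f (p.1 + hbar)} ∩
        {p : AddCircle (1:ℝ) × ℝ | p.2 < f p.1}ᶜ)
        ∪ ({p : AddCircle (1:ℝ) × ℝ | p.2 < f p.1} ∩
        {p : AddCircle (1:ℝ) × ℝ | p.2 < f (p.1 + hbar)}ᶜ) := by
      ext p; simp [hP]
    rw [hPeq]
    exact ((hO1.measurableSet.inter hO2.measurableSet.compl).union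
      (hO2.measurableSet.inter hO1.measurableSet.compl))
  set D : AddCircle (1:ℝ) → ℝ → ℝ≥0∞ :=
    fun x y => P.indicator (fun _ => (1:ℝ≥0∞)) (x, y) with hD
  have hDm : Measurable (uncurry D) := by
    have : uncurry D = P.indicator (fun _ => (1:ℝ≥0∞)) := by
      funext p; cases p; rfl
    rw [this]
    exact measurable_const.indicator hPm
  have hpoint : ∀ x : AddCircle (1:ℝ),
      ∫⁻ y in Set.Ioo (0:ℝ) 1, D x y = ENNReal.ofReal |f (x + hbar) - f x| := by
    intro x
    set Afx := f (x + hbar) with hAfx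
    set Bfx := f x with hBfx
    have hcond : ∀ y : ℝ, ((x, y) ∈ P) ↔ y ∈ Set.Ico (min Afx Bfx) (max Afx Bfx) := by
      intro y
      simp only [hP, Set.mem_setOf_eq, Set.mem_Ico]
      constructor
      · rintro (⟨h1, h2⟩ | ⟨h1, h2⟩)
        · exact ⟨le_trans (min_le_right _ _) (not_lt.mp h2), lt_of_lt_of_le h1 (le_max_left _ _)⟩
        · exact ⟨le_trans (min_le_left _ _) (not_lt.mp h2), lt_of_lt_of_le h1 (le_max_right _ _)⟩
      · rintro ⟨h1, h2⟩
        rcases le_total Afx Bfx with hab | hab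
        · right
          rw [max_eq_right hab] at h2
          rw [min_eq_left hab] at h1
          exact ⟨h2, not_lt.mpr h1⟩
        · left
          rw [max_eq_left hab] at h2
          rw [min_eq_right hab] at h1
          exact ⟨h2, not_lt.mpr h1⟩
    have hfun : (fun y => D x y)
        = (Set.Ico (min Afx Bfx) (max Afx Bfx)).indicator (fun _ => (1:ℝ≥0∞)) := by
      funext y
      simp only [hD, Set.indicator_apply]
      exact if_congr (hcond y) rfl rfl
    have h0B : 0 ≤ min Afx Bfx := le_min (hf0 _) (hf0 _)
    have h1B : max Afx Bfx ≤ 1 := max_le (hf1 _) (hf1 _)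
    have heq : volume (Set.Ico (min Afx Bfx) (max Afx Bfx) ∩ Set.Ioo (0:ℝ) 1)
        = ENNReal.ofReal (max Afx Bfx - min Afx Bfx) := by
      apply le_antisymm
      · refine le_trans (measure_mono Set.inter_subset_left) ?_
        rw [Real.volume_Ico]
      · have hsub : Set.Ioo (min Afx Bfx) (max Afx Bfx) ⊆
            Set.Ico (min Afx Bfx) (max Afx Bfx) ∩ Set.Ioo (0:ℝ) 1 := by
          intro y hy
          exact ⟨⟨hy.1.le, hy.2⟩, ⟨lt_of_le_of_lt h0B hy.1, lt_of_lt_of_le hy.2 h1B⟩⟩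
        calc ENNReal.ofReal (max Afx Bfx - min Afx Bfx)
            = volume (Set.Ioo (min Afx Bfx) (max Afx Bfx)) := (Real.volume_Ioo).symm
          _ ≤ _ := measure_mono hsub
    rw [hfun, lintegral_indicator measurableSet_Ico, setLIntegral_one,
      Measure.restrict_apply measurableSet_Ico, heq, max_sub_min_eq_abs, abs_sub_comm]
  have hybound : ∀ y ∈ Set.Ioo (0:ℝ) 1,
      ∫⁻ x, D x y ≤ ENNReal.ofReal c₀ * ∑' k : K y, ENNReal.ofReal (l y k * φ (l y k)) := by
    intro y hy
    have hyIco : y ∈ Set.Ico (0:ℝ) 1 := ⟨hy.1.le, hy.2⟩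
    set bad : Set (AddCircle (1:ℝ)) :=
      {x | (y < f (x + hbar) ∧ ¬ y < f x) ∨ (y < f x ∧ ¬ y < f (x + hbar))} with hbad
    have hfun : (fun x => D x y) = bad.indicator (fun _ => (1:ℝ≥0∞)) := by
      funext x; rfl
    have ho1 : IsOpen {x : AddCircle (1:ℝ) | y < f (x + hbar)} :=
      isOpen_lt continuous_const (hf.comp (continuous_add_right hbar))
    have ho2 : IsOpen {x : AddCircle (1:ℝ) | y < f x} := isOpen_lt continuous_const hf
    have hbadm : MeasurableSet bad := by
      have hbeq : bad = ({x : AddCircle (1:ℝ) | y < f (x + hbar)} ∩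
          {x : AddCircle (1:ℝ) | y < f x}ᶜ)
          ∪ ({x : AddCircle (1:ℝ) | y < f x} ∩
          {x : AddCircle (1:ℝ) | y < f (x + hbar)}ᶜ) := by
        ext x; simp [hbad]
      rw [hbeq]
      exact ((ho1.measurableSet.inter ho2.measurableSet.compl).union
        (ho2.measurableSet.inter ho1.measurableSet.compl))
    rw [hfun, lintegral_indicator hbadm, setLIntegral_one]
    set W : ℕ → Set (AddCircle (1:ℝ)) := fun k =>
      (arc (a y k - h) (l y k) \ arc (a y k) (l y k))
        ∪ (arc (a y k) (l y k) \ arc (a y k - h) (l y k)) with hW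
    have hU : {x : AddCircle (1:ℝ) | y < f x} = ⋃ k ∈ K y, arc (a y k) (l y k) :=
      hdecomp y hyIco
    have hV : {x : AddCircle (1:ℝ) | y < f (x + hbar)}
        = ⋃ k ∈ K y, arc (a y k - h) (l y k) := by
      have hVpre : {x : AddCircle (1:ℝ) | y < f (x + hbar)}
          = (fun x : AddCircle (1:ℝ) => x + hbar) ⁻¹' {z | y < f z} := rfl
      rw [hVpre, hU]
      simp only [Set.preimage_iUnion]
      exact Set.iUnion_congr fun k => Set.iUnion_congr fun _ =>
        preimage_add_arc h (a y k) (l y k)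
    have hsub : bad ⊆ ⋃ k ∈ K y, W k := by
      intro x hx
      rcases hx with ⟨h1, h2⟩ | ⟨h1, h2⟩
      · have hxV : x ∈ {x : AddCircle (1:ℝ) | y < f (x + hbar)} := h1
        rw [hV] at hxV
        obtain ⟨k, hk, hxk⟩ := Set.mem_iUnion₂.mp hxV
        refine Set.mem_iUnion₂.mpr ⟨k, hk, Or.inl ⟨hxk, fun hmem => h2 ?_⟩⟩
        have hxU : x ∈ ⋃ k ∈ K y, arc (a y k) (l y k) := Set.mem_iUnion₂.mpr ⟨k, hk, hmem⟩
        rw [← hU] at hxU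
        exact hxU
      · have hxU : x ∈ {x : AddCircle (1:ℝ) | y < f x} := h1
        rw [hU] at hxU
        obtain ⟨k, hk, hxk⟩ := Set.mem_iUnion₂.mp hxU
        refine Set.mem_iUnion₂.mpr ⟨k, hk, Or.inr ⟨hxk, fun hmem => h2 ?_⟩⟩
        have hxV : x ∈ ⋃ k ∈ K y, arc (a y k - h) (l y k) := Set.mem_iUnion₂.mpr ⟨k, hk, hmem⟩
        rw [← hV] at hxV
        exact hxV
    refine le_trans (measure_mono hsub) ?_
    refine le_trans (measure_biUnion_le volume (Set.to_countable (K y)) W) ?_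
    have hterm : ∀ k : K y, volume (W k) ≤ ENNReal.ofReal (c₀ * (l y k * φ (l y k))) := by
      rintro ⟨k, hk⟩
      have hm := hlen y hyIco k hk
      have hd1 : |a y k - h - a y k| = |h| := by
        rw [show a y k - h - a y k = -h by ring, abs_neg]
      have hd2 : |a y k - (a y k - h)| = |h| := by
        rw [show a y k - (a y k - h) = h by ring]
      have hh1 : |h| ≤ 1 := le_trans hh ht.2
      have e1 := arc_diff (a y k - h) (a y k) (l y k) hm.2 (by rw [hd1]; exact hh1)
      have e2 := arc_diff (a y k) (a y k - h) (l y k) hm.2 (by rw [hd2]; exact hh1)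
      rw [hd1] at e1; rw [hd2] at e2
      have hminkey := hkey t ht h hh (l y k) hm
      have hmin0 : 0 ≤ min |h| (l y k) := le_min (abs_nonneg h) hm.1.le
      have hmin' : 2 * min |h| (l y k) ≤ c₀ * (l y k * φ (l y k)) := by
        rw [hc₀, div_mul_eq_mul_div, le_div_iff₀ hφt]
        nlinarith
      calc volume (W k)
          ≤ ENNReal.ofReal (min |h| (l y k)) + ENNReal.ofReal (min |h| (l y k)) :=
            le_trans (measure_union_le _ _) (add_le_add e1 e2)
        _ = ENNReal.ofReal (2 * min |h| (l y k)) := by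
            rw [← ENNReal.ofReal_add hmin0 hmin0, two_mul]
        _ ≤ ENNReal.ofReal (c₀ * (l y k * φ (l y k))) := ENNReal.ofReal_le_ofReal hmin'
    refine le_trans (ENNReal.tsum_le_tsum hterm) ?_
    have hsplit : ∀ k : K y, ENNReal.ofReal (c₀ * (l y k * φ (l y k)))
        = ENNReal.ofReal c₀ * ENNReal.ofReal (l y k * φ (l y k)) := fun k =>
      ENNReal.ofReal_mul hc₀0
    rw [tsum_congr hsplit, ENNReal.tsum_mul_left]
  have hlin : ∫⁻ x, ENNReal.ofReal |f (x + hbar) - f x| ≤ ENNReal.ofReal c₀ * lint := by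
    calc ∫⁻ x, ENNReal.ofReal |f (x + hbar) - f x|
        = ∫⁻ x, ∫⁻ y in Set.Ioo (0:ℝ) 1, D x y := (lintegral_congr hpoint).symm
      _ = ∫⁻ y in Set.Ioo (0:ℝ) 1, ∫⁻ x, D x y := lintegral_lintegral_swap hDm.aemeasurable
      _ ≤ ∫⁻ y in Set.Ioo (0:ℝ) 1,
            ENNReal.ofReal c₀ * ∑' k : K y, ENNReal.ofReal (l y k * φ (l y k)) := by
          refine lintegral_mono_ae ?_
          filter_upwards [ae_restrict_mem measurableSet_Ioo] with y hy
          exact hybound y hy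
      _ = ENNReal.ofReal c₀ * lint := lintegral_const_mul' _ _ ENNReal.ofReal_ne_top
  have hfin : ENNReal.ofReal c₀ * lint ≠ ⊤ := ENNReal.mul_ne_top ENNReal.ofReal_ne_top hint.ne
  have hieq : ∫ x : AddCircle (1:ℝ), |f (x + hbar) - f x|
      = (∫⁻ x, ENNReal.ofReal |f (x + hbar) - f x|).toReal :=
    integral_eq_lintegral_of_nonneg_ae (Filter.Eventually.of_forall fun x => abs_nonneg _)
      hg.aestronglyMeasurable
  rw [hieq]
  calc (∫⁻ x, ENNReal.ofReal |f (x + hbar) - f x|).toReal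
      ≤ (ENNReal.ofReal c₀ * lint).toReal := ENNReal.toReal_mono hfin hlin
    _ = c₀ * M := by rw [ENNReal.toReal_mul, ENNReal.toReal_ofReal hc₀0]
    _ ≤ (2*A*M + 1) / φ t := by
        have hcM : c₀ * M = (2*A*M) / φ t := by rw [hc₀]; ring
        rw [hcM]
        gcongr
        · linarith
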